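/- arXiv:0709.4397 — 3 statements merged into one kernel-verified Lean document; each statement's English description precedes it below -/
import Mathlib

section
/- If M ∈ M_n(K) is lower triangular with nonzero diagonal entries, then the sequential mapping M^↓ is a linear automorphism of K^n (i.e., M^s is invertible). -/
open Matrix


/-- The sequential mapping `M^↓`: for `i = 0,...,n-1` in order, perform the
in-place assignment `x_i := ∑ j, M i j * x j` on the (partially updated) vector. -/
def seqMap {K : Type*} [Field K] {n : ℕ} (M : Matrix (Fin n) (Fin n) K)
    (x : Fin n → K) : Fin n → K :=
  Fin.foldl n (fun v i => Function.update v i (∑ j, M i j * v j)) x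

/-- The matrix `M^s` of the sequential mapping of `M`. -/
def seqMat {K : Type*} [Field K] {n : ℕ} (M : Matrix (Fin n) (Fin n) K) :
    Matrix (Fin n) (Fin n) K :=
  fun i j => seqMap M (Pi.single j 1) i

/-- `F_i`: the identity matrix with `i`-th row replaced by the `i`-th row of `M`. -/
def Fmat {K : Type*} [Field K] {n : ℕ} (M : Matrix (Fin n) (Fin n) K) (i : Fin n) :
    Matrix (Fin n) (Fin n) K :=
  (1 : Matrix (Fin n) (Fin n) K).updateRow i (M i)

lemma Fmat_det {K : Type*} [Field K] {n : ℕ} (M : Matrix (Fin n) (Fin n) K) (i : Fin n) :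
    (Fmat M i).det = M i i := by
  have h : M i = ∑ k, (M i k) • (1 : Matrix (Fin n) (Fin n) K) k := by
    funext j
    simp [Matrix.one_apply, Pi.single_apply]
  rw [Fmat, h, Matrix.det_updateRow_sum]
  simp [Matrix.one_apply, Finset.sum_ite_eq']

lemma step_eq_mulVec {K : Type*} [Field K] {n : ℕ} (M : Matrix (Fin n) (Fin n) K)
    (i : Fin n) (v : Fin n → K) :
    Function.update v i (∑ j, M i j * v j) = (Fmat M i) *ᵥ v := by
  funext k
  by_cases hk : k = i
  · subst hk
    simp [Fmat, Matrix.mulVec, dotProduct]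
  · simp [Function.update_of_ne hk, Fmat, Matrix.mulVec, dotProduct,
      Matrix.updateRow_ne hk, Matrix.one_apply, Finset.sum_ite_eq]

lemma foldl_mulVec {K : Type*} [Field K] {n m : ℕ} (g : Fin m → Matrix (Fin n) (Fin n) K)
    (x : Fin n → K) :
    Fin.foldl m (fun v i => (g i) *ᵥ v) x =
      (Fin.foldl m (fun A i => g i * A) 1) *ᵥ x := by
  induction m with
  | zero => simp
  | succ m ih =>
      rw [Fin.foldl_succ_last, Fin.foldl_succ_last, ih, Matrix.mulVec_mulVec]

lemma foldl_isUnit {K : Type*} [Field K] {n m : ℕ} (g : Fin m → Matrix (Fin n) (Fin n) K)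
    (h : ∀ i, IsUnit (g i)) :
    IsUnit (Fin.foldl m (fun A i => g i * A) (1 : Matrix (Fin n) (Fin n) K)) := by
  induction m with
  | zero => simp
  | succ m ih =>
      rw [Fin.foldl_succ_last]
      exact (h _).mul (ih _ (fun i => h _))

lemma seqMap_eq {K : Type*} [Field K] {n : ℕ} (M : Matrix (Fin n) (Fin n) K)
    (x : Fin n → K) :
    seqMap M x = (Fin.foldl n (fun A i => Fmat M i * A) 1) *ᵥ x := by
  rw [seqMap]
  have : (fun (v : Fin n → K) (i : Fin n) => Function.update v i (∑ j, M i j * v j)) =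
      fun v i => (Fmat M i) *ᵥ v := by
    funext v i; exact step_eq_mulVec M i v
  rw [this, foldl_mulVec]

/-- If `M` is lower triangular with nonzero diagonal, the sequential mapping is a
linear automorphism of `K^n`, i.e. `M^s` is invertible. -/
theorem stmt4 {K : Type*} [Field K] {n : ℕ} (M : Matrix (Fin n) (Fin n) K)
    (hlt : ∀ i j : Fin n, i < j → M i j = 0) (hd : ∀ i, M i i ≠ 0) :
    Function.Bijective (seqMap M) ∧ IsUnit (seqMat M) := by
  set S := Fin.foldl n (fun A i => Fmat M i * A) (1 : Matrix (Fin n) (Fin n) K) with hS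
  have hunit : IsUnit S := by
    apply foldl_isUnit
    intro i
    rw [Matrix.isUnit_iff_isUnit_det, Fmat_det]
    exact (hd i).isUnit
  have hseq : seqMat M = S := by
    funext i j
    show seqMap M (Pi.single j 1) i = S i j
    rw [seqMap_eq, ← hS, Matrix.mulVec_single]
    simp
  obtain ⟨u, hu⟩ := hunit
  have key : ∀ x, (↑u⁻¹ : Matrix (Fin n) (Fin n) K) *ᵥ seqMap M x = x := by
    intro x
    rw [seqMap_eq, ← hS, Matrix.mulVec_mulVec, ← hu, Units.inv_mul, Matrix.one_mulVec]
  constructor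
  · constructor
    · intro x y hxy
      rw [← key x, ← key y, hxy]
    · intro y
      refine ⟨(↑u⁻¹ : Matrix (Fin n) (Fin n) K) *ᵥ y, ?_⟩
      rw [seqMap_eq, ← hS, Matrix.mulVec_mulVec, ← hu, Units.mul_inv, Matrix.one_mulVec]
  · rw [hseq]
    exact ⟨u, hu⟩
end

section
/- For every linear mapping E : K^n → K^n with n > 0, the assignment X := E(X) can be computed by a straight-line program of at most 2n−1 in-place linear assignments of components of X, whose first n steps form the sequential program of some matrix M and whose remaining steps each have the form x_i := x_i + x_j with j > i. -/
/-- Run a straight-line program: each instruction `(i, c)` performs the in-place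
linear assignment `x_i := ∑ j, c j * x j`. -/
def runProg {K : Type*} [Field K] {n : ℕ} (P : List (Fin n × (Fin n → K)))
    (x : Fin n → K) : Fin n → K :=
  P.foldl (fun v ic => Function.update v ic.1 (∑ j, ic.2 j * v j)) x

/-! ### Auxiliary machinery -/

/-- The modified matrix: row `i` becomes `A i - (if ε i then A (jf i) else 0)`. -/
def Bm {K : Type*} [Field K] {n m : ℕ} (A : Fin n → Fin m → K) (ε : Fin n → Bool)
    (jf : Fin n → Fin n) (i : Fin n) (t : Fin m) : K :=
  A i t - (if ε i then A (jf i) t else 0)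

/-- Key combinatorial core: any rectangular matrix can be made "sequentially
computable" (each row's leading part lies in the span of the previous rows)
by subtracting from some rows a single later row. -/
theorem coreAux {K : Type*} [Field K] : ∀ (m n : ℕ) (A : Fin n → Fin m → K),
    ∃ (ε : Fin n → Bool) (jf : Fin n → Fin n),
      (∀ i, ε i = true → (i : ℕ) < (jf i : ℕ)) ∧
      (∀ i : Fin n, ∃ c : Fin n → K,
        (∀ k : Fin n, (i : ℕ) ≤ (k : ℕ) → c k = 0) ∧
        (∀ t : Fin m, (t : ℕ) < (i : ℕ) →
          Bm A ε jf i t = ∑ k, c k * Bm A ε jf k t)) := by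
  intro m
  induction m with
  | zero =>
    intro n A
    refine ⟨fun _ => false, id, by simp, fun i => ⟨0, by simp, fun t => t.elim0⟩⟩
  | succ m IH =>
    intro n A
    match n with
    | 0 => exact ⟨fun _ => false, id, by simp, fun i => i.elim0⟩
    | (n' + 1) =>
      by_cases hz : ∀ i, A i 0 = 0
      · -- first column is zero: drop it
        obtain ⟨ε, jf, hlt, hC⟩ := IH (n' + 1) (fun i t => A i t.succ)
        refine ⟨ε, jf, hlt, fun i => ?_⟩
        obtain ⟨c, hsupp, heq⟩ := hC i
        refine ⟨c, hsupp, fun t ht => ?_⟩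
        rcases Fin.eq_zero_or_eq_succ t with rfl | ⟨s, rfl⟩
        · have hB : ∀ k, Bm A ε jf k 0 = 0 := by
            intro k; simp [Bm, hz]
          rw [hB]
          simp [hB]
        · have hs : (s : ℕ) < (i : ℕ) := by
            have := ht; simp [Fin.val_succ] at this; omega
          have := heq s hs
          simpa [Bm] using this
      · -- there is a pivot in column 0
        push_neg at hz
        obtain ⟨r0, hr0⟩ := hz
        -- choose the pivot row + whether row 0 needs an addition
        obtain ⟨r, ε0, hg0, hr⟩ :
            ∃ (r : Fin (n' + 1)) (ε0 : Bool),
              (A 0 0 - (if ε0 then A r 0 else 0)) ≠ 0 ∧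
              (ε0 = true → (0 : ℕ) < (r : ℕ)) := by
          by_cases h00 : A 0 0 ≠ 0
          · exact ⟨0, false, by simpa using h00, by simp⟩
          · push_neg at h00
            refine ⟨r0, true, by simp [h00, hr0], fun _ => ?_⟩
            have : r0 ≠ 0 := by
              intro h; rw [h] at hr0; exact hr0 h00
            exact Nat.pos_of_ne_zero (fun h => this (Fin.ext h))
        set g : Fin (m + 1) → K := fun t => A 0 t - (if ε0 then A r t else 0) with hgdef
        have hg : g 0 ≠ 0 := hg0
        -- Schur complement
        set Ab : Fin n' → Fin m → K :=
          fun i t => A i.succ t.succ - (A i.succ 0 / g 0) * g t.succ with hAb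
        obtain ⟨ε', jf', hlt', hC'⟩ := IH n' Ab
        refine ⟨Fin.cases ε0 ε', Fin.cases r (fun k => (jf' k).succ), ?_, ?_⟩
        · intro i hi
          rcases Fin.eq_zero_or_eq_succ i with rfl | ⟨k, rfl⟩
          · simpa using hr (by simpa using hi)
          · have := hlt' k (by simpa using hi)
            simpa [Fin.val_succ] using this
        · -- the span conditions
          set ε : Fin (n' + 1) → Bool := Fin.cases ε0 ε' with hε
          set jf : Fin (n' + 1) → Fin (n' + 1) := Fin.cases r (fun k => (jf' k).succ) with hjf
          have hB0 : ∀ t, Bm A ε jf 0 t = g t := by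
            intro t; simp [Bm, hε, hjf, hgdef]
          have hBs : ∀ (k : Fin n') (t : Fin (m+1)),
              Bm A ε jf k.succ t = A k.succ t - (if ε' k then A (jf' k).succ t else 0) := by
            intro k t; simp [Bm, hε, hjf]
          set μ : Fin n' → K := fun k => Bm A ε jf k.succ 0 / g 0 with hμ
          have hB0col : ∀ k : Fin n', Bm A ε jf k.succ 0 = μ k * g 0 := by
            intro k; rw [hμ]; field_simp
          have hSchur : ∀ (k : Fin n') (s : Fin m),
              Bm Ab ε' jf' k s = Bm A ε jf k.succ s.succ - μ k * g s.succ := by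
            intro k s
            simp only [Bm, hAb, hμ, hε, hjf, Fin.cases_succ]
            cases h : ε' k <;> simp [h] <;> field_simp <;> ring
          intro i
          rcases Fin.eq_zero_or_eq_succ i with rfl | ⟨k, rfl⟩
          · exact ⟨0, by simp, fun t ht => by simp at ht⟩
          · obtain ⟨c', hsupp', heq'⟩ := hC' k
            refine ⟨Fin.cases (μ k - ∑ q, c' q * μ q) c', ?_, ?_⟩
            · intro q hq
              rcases Fin.eq_zero_or_eq_succ q with rfl | ⟨q', rfl⟩
              · simp [Fin.val_succ] at hq
              · have : (k : ℕ) ≤ (q' : ℕ) := by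
                  simp [Fin.val_succ] at hq; omega
                simp [hsupp' q' this]
            · intro t ht
              rw [Fin.sum_univ_succ]
              simp only [Fin.cases_zero, Fin.cases_succ]
              rcases Fin.eq_zero_or_eq_succ t with rfl | ⟨s, rfl⟩
              · rw [hB0col, hB0]
                have : ∀ q : Fin n', c' q * Bm A ε jf q.succ 0 = (c' q * μ q) * g 0 := by
                  intro q; rw [hB0col]; ring
                rw [Finset.sum_congr rfl (fun q _ => this q), ← Finset.sum_mul]
                ring
              · have hs : (s : ℕ) < (k : ℕ) := by
                  simp [Fin.val_succ] at ht; omega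
                have h1 := heq' s hs
                rw [hSchur] at h1
                have h2 : ∀ q : Fin n', c' q * Bm Ab ε' jf' q s
                    = c' q * Bm A ε jf q.succ s.succ - (c' q * μ q) * g s.succ := by
                  intro q; rw [hSchur]; ring
                rw [Finset.sum_congr rfl (fun q _ => h2 q), Finset.sum_sub_distrib,
                  ← Finset.sum_mul] at h1
                rw [hB0]
                linear_combination h1

/-- The matrix of the sequential program computing `Bm A ε jf`. -/
def Mmat {K : Type*} [Field K] {n : ℕ} (A : Fin n → Fin n → K) (ε : Fin n → Bool)
    (jf : Fin n → Fin n) (c : Fin n → Fin n → K) : Matrix (Fin n) (Fin n) K :=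
  fun i j => if (j : ℕ) < (i : ℕ) then c i j
    else Bm A ε jf i j - ∑ k, c i k * Bm A ε jf k j

section
variable {K : Type*} [Field K] {n : ℕ}

lemma runProg_append' (P Q : List (Fin n × (Fin n → K))) (x : Fin n → K) :
    runProg (P ++ Q) x = runProg Q (runProg P x) :=
  List.foldl_append

lemma sum_single_pair (i j : Fin n) (hij : i ≠ j) (v : Fin n → K) :
    ∑ t, (Pi.single i 1 + Pi.single j 1 : Fin n → K) t * v t = v i + v j := by
  simp only [Pi.add_apply, add_mul, Finset.sum_add_distrib, Pi.single_apply, ite_mul, one_mul,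
    zero_mul]
  rw [Finset.sum_ite_eq' Finset.univ i v, Finset.sum_ite_eq' Finset.univ j v]
  simp

/-- The fix-up additions for indices `p-1, p-2, ..., 0`. -/
def addsFor (ε : Fin n → Bool) (jf : Fin n → Fin n) : ℕ → List (Fin n × (Fin n → K))
  | 0 => []
  | p + 1 =>
    (if h : p < n then
      (if ε ⟨p, h⟩ then
        [(⟨p, h⟩, (Pi.single ⟨p, h⟩ 1 + Pi.single (jf ⟨p, h⟩) 1 : Fin n → K))]
      else [])
    else []) ++ addsFor ε jf p

lemma addsFor_length_le (ε : Fin n → Bool) (jf : Fin n → Fin n) :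
    ∀ p, (addsFor (K := K) ε jf p).length ≤ p := by
  intro p
  induction p with
  | zero => simp [addsFor]
  | succ p ih =>
    rw [addsFor, List.length_append]
    have : ((if h : p < n then
      (if ε ⟨p, h⟩ then
        [(⟨p, h⟩, (Pi.single ⟨p, h⟩ 1 + Pi.single (jf ⟨p, h⟩) 1 : Fin n → K))]
      else []) else []) : List (Fin n × (Fin n → K))).length ≤ 1 := by
      split_ifs <;> simp
    omega

lemma addsFor_length_lt (ε : Fin n → Bool) (jf : Fin n → Fin n)
    (hlt : ∀ i, ε i = true → (i : ℕ) < (jf i : ℕ)) (hn : 0 < n) :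
    (addsFor (K := K) ε jf n).length ≤ n - 1 := by
  obtain ⟨n', rfl⟩ : ∃ n', n = n' + 1 := ⟨n - 1, by omega⟩
  rw [addsFor]
  have hε : ε ⟨n', by omega⟩ = false := by
    by_contra h
    have h1 := hlt ⟨n', by omega⟩ (by simpa using h)
    have h2 := (jf ⟨n', by omega⟩).isLt
    simp only [Fin.val_mk] at h1
    omega
  simp only [Nat.lt_succ_self, dif_pos, hε]
  simpa using addsFor_length_le (K := K) ε jf n'

lemma addsFor_mem (ε : Fin n → Bool) (jf : Fin n → Fin n)
    (hlt : ∀ i, ε i = true → (i : ℕ) < (jf i : ℕ)) :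
    ∀ p, ∀ ic ∈ addsFor (K := K) ε jf p, ∃ i j : Fin n, i < j ∧
      ic = (i, (Pi.single i 1 + Pi.single j 1 : Fin n → K)) := by
  intro p
  induction p with
  | zero => simp [addsFor]
  | succ p ih =>
    intro ic hic
    rw [addsFor, List.mem_append] at hic
    rcases hic with h | h
    · split at h
      · rename_i hp
        split at h
        · rename_i hε
          simp only [List.mem_singleton] at h
          exact ⟨⟨p, hp⟩, jf ⟨p, hp⟩, by rw [Fin.lt_def]; exact hlt _ hε, h⟩
        · simp at h
      · simp at h
    · exact ih ic h

lemma addsFor_run (A : Fin n → Fin n → K) (ε : Fin n → Bool) (jf : Fin n → Fin n)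
    (hlt : ∀ i, ε i = true → (i : ℕ) < (jf i : ℕ)) (x : Fin n → K) :
    ∀ p, p ≤ n → ∀ v : Fin n → K,
      (∀ k : Fin n, (k : ℕ) < p → v k = ∑ t, Bm A ε jf k t * x t) →
      (∀ k : Fin n, p ≤ (k : ℕ) → v k = ∑ t, A k t * x t) →
      runProg (addsFor ε jf p) v = fun k => ∑ t, A k t * x t := by
  intro p
  induction p with
  | zero =>
    intro _ v _ h2
    funext k
    simpa [addsFor, runProg] using h2 k (Nat.zero_le _)
  | succ p ih =>
    intro hp v h1 h2
    have hpn : p < n := hp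
    set i : Fin n := ⟨p, hpn⟩ with hidef
    rw [addsFor, runProg_append', dif_pos hpn]
    cases hε : ε i
    · rw [if_neg (by simp [hε])]
      refine ih (by omega) v (fun k hk => h1 k (by omega)) (fun k hk => ?_)
      rcases Nat.lt_or_ge (k : ℕ) (p+1) with h | h
      · have hk2 : k = i := by
          apply Fin.ext; simp [hidef]; omega
        rw [h1 k (by omega)]
        subst hk2
        congr 1; funext t
        simp [Bm, hε]
      · exact h2 k h
    · rw [if_pos (by simp [hε])]
      have hij : (i : ℕ) < (jf i : ℕ) := hlt i hε
      have hrun : runProg [(i, (Pi.single i 1 + Pi.single (jf i) 1 : Fin n → K))] v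
          = Function.update v i (v i + v (jf i)) := by
        simp only [runProg, List.foldl_cons, List.foldl_nil]
        rw [sum_single_pair i (jf i) (fun h => Nat.ne_of_lt hij (congrArg Fin.val h)) v]
      rw [hrun]
      refine ih (by omega) _ (fun k hk => ?_) (fun k hk => ?_)
      · rw [Function.update_of_ne (by intro h; rw [h] at hk; simp [hidef] at hk)]
        exact h1 k (by omega)
      · rcases Nat.lt_or_ge (k : ℕ) (p+1) with h | h
        · have hk2 : k = i := by apply Fin.ext; simp [hidef]; omega
          subst hk2
          rw [Function.update_self]
          rw [h1 i (by simp [hidef]), h2 (jf i) (by omega)]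
          rw [← Finset.sum_add_distrib]
          congr 1; funext t
          simp [Bm, hε]; ring
        · rw [Function.update_of_ne (by intro hh; rw [hh] at h; simp [hidef] at h)]
          exact h2 k (by omega)

lemma seq_step (A : Fin n → Fin n → K) (ε : Fin n → Bool) (jf : Fin n → Fin n)
    (c : Fin n → Fin n → K) (p : Fin n) (x v : Fin n → K)
    (hsupp : ∀ k : Fin n, (p : ℕ) ≤ (k : ℕ) → c p k = 0)
    (heq : ∀ t : Fin n, (t : ℕ) < (p : ℕ) →
      Bm A ε jf p t = ∑ k, c p k * Bm A ε jf k t)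
    (hv : ∀ k : Fin n, v k =
      if (k : ℕ) < (p : ℕ) then ∑ t, Bm A ε jf k t * x t else x k) :
    ∑ j, Mmat A ε jf c p j * v j = ∑ t, Bm A ε jf p t * x t := by
  have step1 : ∀ j : Fin n, Mmat A ε jf c p j * v j
      = c p j * (∑ t, Bm A ε jf j t * x t)
        + (if (j : ℕ) < (p : ℕ) then 0
           else Bm A ε jf p j * x j - (∑ k, c p k * Bm A ε jf k j) * x j) := by
    intro j
    rw [hv j]
    by_cases h : (j : ℕ) < (p : ℕ)
    · simp [Mmat, h]
    · simp only [Mmat, if_neg h, hsupp j (le_of_not_gt h), zero_mul, zero_add]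
      ring
  rw [Finset.sum_congr rfl fun j _ => step1 j, Finset.sum_add_distrib]
  have swap : ∑ j, c p j * (∑ t, Bm A ε jf j t * x t)
      = ∑ t, (∑ j, c p j * Bm A ε jf j t) * x t := by
    simp_rw [Finset.mul_sum]
    rw [Finset.sum_comm]
    simp_rw [Finset.sum_mul, mul_assoc]
  rw [swap, ← Finset.sum_add_distrib]
  refine Finset.sum_congr rfl fun t _ => ?_
  by_cases h : (t : ℕ) < (p : ℕ)
  · rw [if_pos h, ← heq t h]; ring
  · rw [if_neg h]; ring

lemma run_seq (A : Fin n → Fin n → K) (ε : Fin n → Bool) (jf : Fin n → Fin n)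
    (c : Fin n → Fin n → K) (x : Fin n → K)
    (hsupp : ∀ i k : Fin n, (i : ℕ) ≤ (k : ℕ) → c i k = 0)
    (heq : ∀ i t : Fin n, (t : ℕ) < (i : ℕ) →
      Bm A ε jf i t = ∑ k, c i k * Bm A ε jf k t) :
    ∀ p, p ≤ n → ∀ k : Fin n,
      runProg ((List.ofFn (fun i => (i, Mmat A ε jf c i))).take p) x k
        = if (k : ℕ) < p then ∑ t, Bm A ε jf k t * x t else x k := by
  intro p
  induction p with
  | zero => intro _ k; simp [runProg]
  | succ p ih =>
    intro hp k
    have hpn : p < n := hp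
    rw [List.take_succ]
    have hget : (List.ofFn (fun i => (i, Mmat A ε jf c i)))[p]?
        = some (⟨p, hpn⟩, Mmat A ε jf c ⟨p, hpn⟩) := by
      rw [List.getElem?_ofFn]
      simp [List.ofFnNthVal, hpn]
    rw [hget, runProg_append']
    set v : Fin n → K :=
      runProg ((List.ofFn (fun i => (i, Mmat A ε jf c i))).take p) x with hvdef
    have hv : ∀ k : Fin n, v k =
        if (k : ℕ) < p then ∑ t, Bm A ε jf k t * x t else x k :=
      fun k => ih (by omega) k
    have hstep : runProg [(⟨p, hpn⟩, Mmat A ε jf c ⟨p, hpn⟩)] v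
        = Function.update v ⟨p, hpn⟩ (∑ t, Bm A ε jf ⟨p, hpn⟩ t * x t) := by
      simp only [runProg, List.foldl_cons, List.foldl_nil]
      rw [seq_step A ε jf c ⟨p, hpn⟩ x v (hsupp ⟨p, hpn⟩) (heq ⟨p, hpn⟩) hv]
    rw [Option.toList_some, hstep]
    by_cases hk : k = ⟨p, hpn⟩
    · subst hk
      rw [Function.update_self, if_pos (by simp)]
    · rw [Function.update_of_ne hk, hv k]
      have : (k : ℕ) ≠ p := fun h => hk (Fin.ext h)
      by_cases h : (k : ℕ) < p
      · rw [if_pos h, if_pos (by omega)]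
      · rw [if_neg h, if_neg (by omega)]

end

/-- Theorem 1: every linear map `E` is computed in place by a straight-line
program of at most `2n - 1` linear assignments, whose first `n` steps form the
sequential program `M^π` of some matrix `M` and whose remaining steps are of the
form `x_i := x_i + x_j` with `i < j`. -/
theorem stmt8 {K : Type*} [Field K] {n : ℕ} (hn : 0 < n)
    (E : (Fin n → K) →ₗ[K] (Fin n → K)) :
    ∃ P : List (Fin n × (Fin n → K)),
      P.length ≤ 2 * n - 1 ∧
      (∀ x, runProg P x = E x) ∧
      (∃ M : Matrix (Fin n) (Fin n) K, P.take n = List.ofFn (fun i => (i, M i))) ∧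
      (∀ ic ∈ P.drop n, ∃ i j : Fin n, i < j ∧
        ic = (i, (Pi.single i 1 + Pi.single j 1 : Fin n → K))) := by
  set A : Fin n → Fin n → K := fun i j => LinearMap.toMatrix' E i j with hA
  have hE : ∀ (x : Fin n → K) (k : Fin n), E x k = ∑ t, A k t * x t := by
    intro x k
    have h0 : E x = Matrix.mulVec (LinearMap.toMatrix' E) x := by
      rw [← Matrix.toLin'_apply, Matrix.toLin'_toMatrix']
    rw [h0]
    simp [Matrix.mulVec, dotProduct, hA]
  obtain ⟨ε, jf, hlt, hC⟩ := coreAux n n A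
  choose c hsupp heq using hC
  set L : List (Fin n × (Fin n → K)) := List.ofFn (fun i => (i, Mmat A ε jf c i)) with hL
  set P : List (Fin n × (Fin n → K)) := L ++ addsFor ε jf n with hP
  have hLlen : L.length = n := by simp [hL]
  refine ⟨P, ?_, ?_, ⟨Mmat A ε jf c, ?_⟩, ?_⟩
  · have h1 := addsFor_length_lt (K := K) ε jf hlt hn
    rw [hP, List.length_append, hLlen]
    omega
  · intro x
    rw [hP, runProg_append']
    have hseq : runProg L x = fun k => ∑ t, Bm A ε jf k t * x t := by
      funext k
      have := run_seq A ε jf c x hsupp heq n le_rfl k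
      rw [hL]
      rw [List.take_of_length_le (by simp)] at this
      rw [this, if_pos k.isLt]
    rw [hseq]
    rw [addsFor_run A ε jf hlt x n le_rfl _ (fun k hk => rfl)
      (fun k hk => absurd k.isLt (by omega))]
    funext k
    rw [hE x k]
  · have h3 : List.take L.length (L ++ addsFor (K := K) ε jf n) = L := List.take_left
    rw [hLlen] at h3
    exact h3.trans hL
  · intro ic hic
    have h4 : List.drop L.length (L ++ addsFor (K := K) ε jf n) = addsFor (K := K) ε jf n := List.drop_left
    rw [hLlen] at h4
    rw [hP, h4] at hic
    exact addsFor_mem ε jf hlt n ic hic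
end

section
/- For every matrix M ∈ M_n(K) there exists a regular matrix dM (all diagonal entries 1) such that (dM)^s is similar to M, meaning (dM)^s agrees with M off the diagonal. -/
section Aux
open Matrix
variable {K : Type*} [Field K] {n : ℕ}

/-- The single update step. -/
def stepFn (M : Matrix (Fin n) (Fin n) K) (v : Fin n → K) (a : Fin n) : Fin n → K :=
  Function.update v a (∑ j, M a j * v j)

lemma foldl_stab (M : Matrix (Fin n) (Fin n) K) :
    ∀ (l : List (Fin n)) (x : Fin n → K) (i : Fin n), (∀ a ∈ l, a ≠ i) →
      List.foldl (stepFn M) x l i = x i := by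
  intro l
  induction l with
  | nil => intro x i _; rfl
  | cons a t ih =>
    intro x i h
    have ha : i ≠ a := (h a List.mem_cons_self).symm
    rw [List.foldl_cons, ih _ i (fun b hb => h b (List.mem_cons_of_mem a hb))]
    exact Function.update_of_ne ha _ x

lemma foldl_entry (M : Matrix (Fin n) (Fin n) K) :
    ∀ (l : List (Fin n)), l.Pairwise (· < ·) → ∀ (x : Fin n → K), ∀ i ∈ l,
      List.foldl (stepFn M) x l i =
        ∑ j, M i j * (if j < i ∧ j ∈ l then List.foldl (stepFn M) x l j else x j) := by
  intro l
  induction l with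
  | nil => intro _ x i hi; simp at hi
  | cons a t ih =>
    intro hp x i hi
    have hat : ∀ b ∈ t, a < b := fun b hb => (List.pairwise_cons.mp hp).1 b hb
    have hpt : t.Pairwise (· < ·) := (List.pairwise_cons.mp hp).2
    rw [List.foldl_cons]
    rcases List.mem_cons.mp hi with rfl | hit
    · -- i = a : all elements of t are > i
      rw [foldl_stab M t _ i (fun b hb => (hat b hb).ne')]
      have h1 : (stepFn M x i) i = ∑ j, M i j * x j := by
        simp [stepFn]
      rw [h1]
      apply Finset.sum_congr rfl
      intro j _
      congr 1
      have : ¬ (j < i ∧ j ∈ i :: t) := by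
        rintro ⟨h1, h2⟩
        rcases List.mem_cons.mp h2 with rfl | hjt
        · exact lt_irrefl _ h1
        · exact absurd (hat j hjt) (lt_asymm h1)
      rw [if_neg this]
    · -- i ∈ t
      rw [ih hpt (stepFn M x a) i hit]
      apply Finset.sum_congr rfl
      intro j _
      congr 1
      by_cases hjt : j < i ∧ j ∈ t
      · rw [if_pos hjt, if_pos ⟨hjt.1, List.mem_cons_of_mem a hjt.2⟩]
      · by_cases hja : j = a
        · subst hja
          have hji : j < i := hat i hit
          rw [if_neg hjt, if_pos ⟨hji, List.mem_cons_self⟩,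
            foldl_stab M t _ j (fun b hb => (hat b hb).ne')]
        · have hcon : ¬ (j < i ∧ j ∈ a :: t) := by
            rintro ⟨h1, h2⟩
            rcases List.mem_cons.mp h2 with h3 | h4
            · exact hja h3
            · exact hjt ⟨h1, h4⟩
          rw [if_neg hjt, if_neg hcon]
          exact Function.update_of_ne hja _ x

lemma seqMap_eq_foldl (M : Matrix (Fin n) (Fin n) K) (x : Fin n → K) :
    seqMap M x = List.foldl (stepFn M) x (List.finRange n) :=
  Fin.foldl_eq_foldl_finRange _ _

lemma seqMap_eq_s9 (M : Matrix (Fin n) (Fin n) K) (x : Fin n → K) (i : Fin n) :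
    seqMap M x i = ∑ j, M i j * (if j < i then seqMap M x j else x j) := by
  simp only [seqMap_eq_foldl]
  rw [foldl_entry M (List.finRange n) (List.pairwise_lt_finRange n) x i (List.mem_finRange i)]
  apply Finset.sum_congr rfl
  intro j _
  congr 1
  simp [List.mem_finRange]

lemma seqMat_eq (M : Matrix (Fin n) (Fin n) K) (i j : Fin n) :
    seqMat M i j = (∑ k ∈ Finset.univ.filter (· < i), M i k * seqMat M k j)
      + (if i ≤ j then M i j else 0) := by
  have h := seqMap_eq_s9 M (Pi.single j 1) i
  rw [show seqMat M i j = seqMap M (Pi.single j 1) i from rfl, h]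
  have hsplit : ∀ k : Fin n, M i k * (if k < i then seqMap M (Pi.single j 1) k
      else (Pi.single j (1:K) : Fin n → K) k) = (if k < i then M i k * seqMat M k j
      else if k = j then M i k else 0) := by
    intro k
    by_cases hk : k < i
    · rw [if_pos hk, if_pos hk]; rfl
    · rw [if_neg hk, if_neg hk, Pi.single_apply]
      by_cases hkj : k = j <;> simp [hkj]
  simp only [hsplit]
  rw [Finset.sum_ite, Finset.sum_ite_eq' (Finset.univ.filter _) j (fun k => M i k)]
  congr 1
  all_goals simp [not_lt]

/-- `seqMat A i j` only depends on the rows `k ≤ i` of `A`. -/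
lemma seqMat_congr (A B : Matrix (Fin n) (Fin n) K) (i j : Fin n)
    (h : ∀ k, k ≤ i → A k = B k) : seqMat A i j = seqMat B i j := by
  suffices H : ∀ (N : ℕ) (i j : Fin n), (i : ℕ) = N → (∀ k, k ≤ i → A k = B k) →
      seqMat A i j = seqMat B i j from H i i j rfl h
  intro N
  induction N using Nat.strong_induction_on with
  | _ N ih =>
  intro i j hN h
  rw [seqMat_eq, seqMat_eq, h i le_rfl]
  congr 1
  apply Finset.sum_congr rfl
  intro k hk
  simp only [Finset.mem_filter] at hk
  rw [ih (k : ℕ) (hN ▸ hk.2) k j rfl (fun t ht => h t (ht.trans hk.2.le))]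

lemma stepFn_eq_mulVec (M : Matrix (Fin n) (Fin n) K) (v : Fin n → K) (a : Fin n) :
    stepFn M v a = Fmat M a *ᵥ v := by
  funext k
  rw [stepFn, Function.update_apply]
  by_cases hk : k = a
  · rw [if_pos hk, hk]
    simp [Fmat, Matrix.mulVec, dotProduct]
  · rw [if_neg hk]
    simp [Fmat, Matrix.mulVec, dotProduct, Matrix.updateRow_ne hk,
      Matrix.one_apply]

lemma foldl_mul (M : Matrix (Fin n) (Fin n) K) :
    ∀ (l : List (Fin n)) (P Q : Matrix (Fin n) (Fin n) K),
      List.foldl (fun P a => Fmat M a * P) (P * Q) l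
        = List.foldl (fun P a => Fmat M a * P) P l * Q := by
  intro l
  induction l with
  | nil => intro P Q; rfl
  | cons a t ih =>
    intro P Q
    rw [List.foldl_cons, List.foldl_cons, ← Matrix.mul_assoc, ih]

lemma foldl_step_mulVec (M : Matrix (Fin n) (Fin n) K) :
    ∀ (l : List (Fin n)) (x : Fin n → K),
      List.foldl (stepFn M) x l = List.foldl (fun P a => Fmat M a * P) 1 l *ᵥ x := by
  intro l
  induction l with
  | nil => intro x; rw [List.foldl_nil, List.foldl_nil, Matrix.one_mulVec]
  | cons a t ih =>
    intro x
    have h2 := foldl_mul M t 1 (Fmat M a)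
    rw [Matrix.one_mul] at h2
    rw [List.foldl_cons, List.foldl_cons, ih, stepFn_eq_mulVec,
      Matrix.mulVec_mulVec, Matrix.mul_one, h2]

lemma isUnit_Fmat (M : Matrix (Fin n) (Fin n) K) (a : Fin n) (h : M a a = 1) :
    IsUnit (Fmat M a) := by
  set G : Matrix (Fin n) (Fin n) K := (1 : Matrix (Fin n) (Fin n) K).updateRow a
      (fun j => if j = a then 1 else -(M a j)) with hG
  have hGa : ∀ k j : Fin n, G k j = if k = a then (if j = a then 1 else -(M a j))
      else (if k = j then 1 else 0) := by
    intro k j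
    rw [hG, Matrix.updateRow_apply]
    by_cases hk : k = a
    · simp [hk]
    · simp [hk, Matrix.one_apply]
  have hFrow : ∀ i k : Fin n, Fmat M a i k
      = if i = a then M a k else (if i = k then 1 else 0) := by
    intro i k
    rw [Fmat, Matrix.updateRow_apply]
    by_cases hk : i = a
    · simp [hk]
    · simp [hk, Matrix.one_apply]
  have hFG : Fmat M a * G = 1 := by
    ext i j
    rw [Matrix.mul_apply]
    by_cases hi : i = a
    · rw [hi]
      by_cases hj : j = a
      · rw [hj]
        have h1 : ∀ k : Fin n, Fmat M a a k * G k a = if k = a then M a a else 0 := by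
          intro k
          rw [hFrow, hGa, if_pos rfl]
          by_cases hk : k = a <;> simp [hk]
        rw [Finset.sum_congr rfl (fun k _ => h1 k), Finset.sum_ite_eq' Finset.univ a]
        simp [h, Matrix.one_apply]
      · have h1 : ∀ k : Fin n, Fmat M a a k * G k j
            = (if k = a then -(M a j) else 0) + (if k = j then M a j else 0) := by
          intro k
          rw [hFrow, hGa, if_pos rfl]
          by_cases hk : k = a
          · rw [if_pos hk, if_pos hk, hk, h, one_mul, if_neg hj,
              if_neg (fun hc : a = j => hj hc.symm), add_zero]
          · rw [if_neg hk, if_neg hk, zero_add]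
            by_cases hkj : k = j <;> simp [hkj]
        rw [Finset.sum_congr rfl (fun k _ => h1 k), Finset.sum_add_distrib,
          Finset.sum_ite_eq' Finset.univ a, Finset.sum_ite_eq' Finset.univ j]
        simp [Matrix.one_apply, Ne.symm hj]
    · have h1 : ∀ k : Fin n, Fmat M a i k * G k j = if k = i then G i j else 0 := by
        intro k
        rw [hFrow, if_neg hi]
        by_cases hk : i = k
        · rw [if_pos hk, if_pos hk.symm, one_mul, hk]
        · rw [if_neg hk, if_neg (fun hc : k = i => hk hc.symm), zero_mul]
      rw [Finset.sum_congr rfl (fun k _ => h1 k), Finset.sum_ite_eq' Finset.univ i]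
      rw [hGa, if_neg hi]
      simp [Matrix.one_apply]
  have hdet : IsUnit (Fmat M a).det := by
    have hd := congrArg Matrix.det hFG
    rw [Matrix.det_mul, Matrix.det_one] at hd
    exact isUnit_iff_exists_inv.mpr ⟨_, hd⟩
  exact (Matrix.isUnit_iff_isUnit_det _).mpr hdet

lemma isUnit_foldl_Fmat (M : Matrix (Fin n) (Fin n) K) (h : ∀ i, M i i = 1) :
    ∀ (l : List (Fin n)), IsUnit (List.foldl (fun P a => Fmat M a * P) 1 l) := by
  intro l
  induction l with
  | nil => exact isUnit_one
  | cons a t ih =>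
    have h2 := foldl_mul M t 1 (Fmat M a)
    rw [Matrix.one_mul] at h2
    rw [List.foldl_cons, Matrix.mul_one, h2]
    exact ih.mul (isUnit_Fmat M a (h a))

lemma isUnit_seqMat (M : Matrix (Fin n) (Fin n) K) (h : ∀ i, M i i = 1) :
    IsUnit (seqMat M) := by
  have hMat : seqMat M = List.foldl (fun P a => Fmat M a * P) 1 (List.finRange n) := by
    ext i j
    rw [show seqMat M i j = seqMap M (Pi.single j 1) i from rfl, seqMap_eq_foldl,
      foldl_step_mulVec, Matrix.mulVec_single]
    exact mul_one _
  rw [hMat]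
  exact isUnit_foldl_Fmat M h (List.finRange n)

end Aux

open Matrix

/-- Theorem 2: for every matrix `M` there is a regular matrix `dM` such that
`(dM)^s` is similar to `M`, i.e. agrees with `M` off the diagonal. -/
theorem stmt9 {K : Type*} [Field K] {n : ℕ} (M : Matrix (Fin n) (Fin n) K) :
    ∃ dM : Matrix (Fin n) (Fin n) K, (∀ i, dM i i = 1) ∧
      ∀ i j : Fin n, i ≠ j → seqMat dM i j = M i j := by
  have key : ∀ m : ℕ, ∃ dM : Matrix (Fin n) (Fin n) K, (∀ i, dM i i = 1) ∧
      ∀ i j : Fin n, i ≠ j → (i : ℕ) < m → seqMat dM i j = M i j := by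
    intro m
    induction m with
    | zero =>
      exact ⟨1, fun i => Matrix.one_apply_eq i,
        fun i j _ h => absurd h (Nat.not_lt_zero _)⟩
    | succ m ih =>
      obtain ⟨dM, hdiag, hprev⟩ := ih
      by_cases hm : m < n
      case neg =>
        refine ⟨dM, hdiag, fun i j hij hi => hprev i j hij ?_⟩
        have := i.isLt
        omega
      case pos =>
      set i0 : Fin n := ⟨m, hm⟩ with hi0
      set dM₀ : Matrix (Fin n) (Fin n) K :=
        fun k => if (k : ℕ) < m then dM k else (1 : Matrix (Fin n) (Fin n) K) k with hdM₀
      have hdM₀lo : ∀ k : Fin n, (k : ℕ) < m → dM₀ k = dM k := by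
        intro k hk; rw [hdM₀]; simp [hk]
      have hdM₀hi : ∀ k : Fin n, ¬ ((k : ℕ) < m) →
          dM₀ k = (1 : Matrix (Fin n) (Fin n) K) k := by
        intro k hk; rw [hdM₀]; simp [hk]
      have hdiag₀ : ∀ i, dM₀ i i = 1 := by
        intro i
        by_cases h : (i : ℕ) < m
        · rw [hdM₀lo i h]; exact hdiag i
        · rw [hdM₀hi i h]; exact Matrix.one_apply_eq i
      obtain ⟨u, hu⟩ := isUnit_seqMat dM₀ hdiag₀
      set t : Fin n → K := fun j => if (j : ℕ) < m then M i0 j else 0 with ht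
      set c : Fin n → K := t ᵥ* (↑u⁻¹ : Matrix (Fin n) (Fin n) K) with hc
      have hct : c ᵥ* seqMat dM₀ = t := by
        rw [hc, ← hu, Matrix.vecMul_vecMul, Units.inv_mul, Matrix.vecMul_one]
      -- rows `k` with `k ≥ m` of `seqMat dM₀` are identity rows
      have hT0row : ∀ k : Fin n, ¬ ((k : ℕ) < m) → ∀ j,
          seqMat dM₀ k j = (1 : Matrix (Fin n) (Fin n) K) k j := by
        intro k hk j
        rw [seqMat_eq]
        have hz : ∀ x ∈ Finset.univ.filter (· < k), dM₀ k x * seqMat dM₀ x j = 0 := by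
          intro x hx
          simp only [Finset.mem_filter] at hx
          rw [hdM₀hi k hk, Matrix.one_apply_ne (Ne.symm hx.2.ne), zero_mul]
        rw [Finset.sum_eq_zero hz, zero_add, hdM₀hi k hk]
        by_cases hkj : k ≤ j
        · rw [if_pos hkj]
        · rw [if_neg hkj, Matrix.one_apply_ne (fun hc : k = j => hkj (le_of_eq hc))]
      -- rows `k < m` of `seqMat dM₀` agree with those of `seqMat dM`
      have hrowagree : ∀ k : Fin n, (k : ℕ) < m → ∀ j, seqMat dM₀ k j = seqMat dM k j := by
        intro k hkm j
        apply seqMat_congr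
        intro s hs
        exact hdM₀lo s (lt_of_le_of_lt hs hkm)
      have hsum : ∀ j : Fin n, (j : ℕ) < m →
          ∑ k ∈ Finset.univ.filter (· < i0), c k * seqMat dM k j = M i0 j := by
        intro j hj
        have h1 : ∑ k, c k * seqMat dM₀ k j = t j := congrFun hct j
        rw [← Finset.sum_filter_add_sum_filter_not Finset.univ (· < i0)
          (fun k => c k * seqMat dM₀ k j)] at h1
        have h2 : ∑ k ∈ Finset.univ.filter (fun k => ¬ k < i0),
            c k * seqMat dM₀ k j = 0 := by
          apply Finset.sum_eq_zero
          intro k hk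
          simp only [Finset.mem_filter, not_lt] at hk
          have hkm : ¬ ((k : ℕ) < m) := by
            have h5 : m ≤ (k : ℕ) := Fin.le_def.mp hk.2
            omega
          have hkj : k ≠ j := by
            intro hc
            rw [hc] at hkm
            exact hkm hj
          rw [hT0row k hkm j, Matrix.one_apply_ne hkj, mul_zero]
        rw [h2, add_zero] at h1
        have h3 : ∑ k ∈ Finset.univ.filter (· < i0), c k * seqMat dM₀ k j
            = ∑ k ∈ Finset.univ.filter (· < i0), c k * seqMat dM k j := by
          apply Finset.sum_congr rfl
          intro k hk
          simp only [Finset.mem_filter] at hk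
          rw [hrowagree k (Fin.lt_def.mp hk.2) j]
        rw [← h3, h1, ht]
        simp [hj]
      -- the new row `r` and the new matrix
      set r : Fin n → K := fun j => if (j : ℕ) < m then c j else if j = i0 then 1
        else M i0 j - ∑ k ∈ Finset.univ.filter (· < i0), c k * seqMat dM k j with hr
      set dM' : Matrix (Fin n) (Fin n) K := dM.updateRow i0 r with hdM'
      have hne : ∀ k : Fin n, (k : ℕ) < m → k ≠ i0 := by
        intro k hk hcon
        rw [hcon] at hk
        exact lt_irrefl m hk
      have hrowsbelow : ∀ k : Fin n, (k : ℕ) < m → dM' k = dM k := by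
        intro k hk
        rw [hdM', Matrix.updateRow_ne (hne k hk)]
      refine ⟨dM', ?_, ?_⟩
      · intro i
        by_cases hi : i = i0
        · rw [hi, hdM', Matrix.updateRow_self, hr]
          simp [hi0]
        · rw [hdM', Matrix.updateRow_ne hi]
          exact hdiag i
      · intro i j hij hilt
        by_cases hi : (i : ℕ) < m
        · have heq : seqMat dM' i j = seqMat dM i j :=
            seqMat_congr _ _ i j (fun k hk =>
              hrowsbelow k (lt_of_le_of_lt (Fin.le_def.mp hk) hi))
          rw [heq]
          exact hprev i j hij hi
        · have hi0eq : i = i0 := Fin.ext (by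
            have := i.isLt
            simp only [hi0]
            omega)
          rw [hi0eq] at hij ⊢
          rw [seqMat_eq]
          have hsame : ∀ k ∈ Finset.univ.filter (· < i0),
              dM' i0 k * seqMat dM' k j = c k * seqMat dM k j := by
            intro k hk
            simp only [Finset.mem_filter] at hk
            have hkm : (k : ℕ) < m := Fin.lt_def.mp hk.2
            have e1 : dM' i0 k = c k := by
              rw [hdM', Matrix.updateRow_self, hr]
              simp [hkm]
            have e2 : seqMat dM' k j = seqMat dM k j :=
              seqMat_congr _ _ k j (fun s hs =>
                hrowsbelow s (lt_of_le_of_lt (Fin.le_def.mp hs) hkm))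
            rw [e1, e2]
          rw [Finset.sum_congr rfl hsame]
          by_cases hj : (j : ℕ) < m
          · have hn : ¬ (i0 ≤ j) := by
              rw [Fin.le_def]
              simp only [hi0]
              omega
            rw [if_neg hn, add_zero]
            exact hsum j hj
          · have hj0 : i0 ≤ j := by
              rw [Fin.le_def]
              simp only [hi0]
              omega
            have hjne : j ≠ i0 := fun hcon => hij hcon.symm
            rw [if_pos hj0, hdM', Matrix.updateRow_self, hr]
            simp only [if_neg hj, if_neg hjne]
            ring
  obtain ⟨dM, h1, h2⟩ := key n
  exact ⟨dM, h1, fun i j hij => h2 i j hij i.isLt⟩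
end
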